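/- There exists d₀ such that for every integer d ≥ d₀ the following holds with r₀ = 2^d: there exist a real number r with 0 < r ≤ r₀ and a positive integer t ≤ 4r² such that the number of unordered pairs {p, q} of distinct lattice points p, q ∈ ℤ^d lying on the origin-centered sphere of radius r with squared distance ‖p − q‖² = t is at least V(B_d(r₀ − √d/2))² / (8·r₀⁶), where V(B_d(ρ)) denotes the d-dimensional Lebesgue volume of the closed ball of radius ρ in ℝ^d. -/

import Mathlib

open MeasureTheory Finset

section ManyPairsAux

lemma manyPairs_nat_ineq (d : ℕ) (hd : 10 ≤ d) : 9 * d ≤ 2 * 2 ^ d := by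
  induction d, hd using Nat.le_induction with
  | base => norm_num
  | succ n hn ih =>
    have h9 : (9 : ℕ) ≤ 2 * 2 ^ n := by
      calc (9 : ℕ) ≤ 2 * 2 ^ 10 := by norm_num
      _ ≤ 2 * 2 ^ n := by gcongr <;> norm_num
    calc 9 * (n + 1) = 9 * n + 9 := by ring
    _ ≤ 2 * 2 ^ n + 2 * 2 ^ n := by omega
    _ = 2 * 2 ^ (n + 1) := by ring

lemma manyPairs_pair_eq {α : Type*} [DecidableEq α] {p q a b : α} (hpq : p ≠ q)
    (h : ({p, q} : Finset α) = {a, b}) : (p = a ∧ q = b) ∨ (p = b ∧ q = a) := by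
  have hp : p ∈ ({a, b} : Finset α) := by rw [← h]; simp
  have hq : q ∈ ({a, b} : Finset α) := by rw [← h]; simp
  have ha : a ∈ ({p, q} : Finset α) := by rw [h]; simp
  have hb : b ∈ ({p, q} : Finset α) := by rw [h]; simp
  simp only [Finset.mem_insert, Finset.mem_singleton] at hp hq ha hb
  rcases hp with rfl | rfl <;> rcases hq with h1 | h1 <;> tauto

end ManyPairsAux

set_option maxHeartbeats 1600000 in
/-- For all sufficiently large `d`, with `r₀ = 2^d` there are a radius `r` with `0 < r ≤ r₀`
and a positive integer `t ≤ 4r²` such that at least `V(B_d(r₀ - √d/2))² / (8 r₀⁶)` unordered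
pairs of distinct lattice points on the origin-centered sphere of radius `r` in `ℝ^d` have
squared distance exactly `t`. -/
theorem many_pairs_same_distance_on_sphere :
    ∃ d₀ : ℕ, ∀ d : ℕ, d₀ ≤ d →
      ∃ r : ℝ, 0 < r ∧ r ≤ (2 : ℝ) ^ d ∧
        ∃ t : ℕ, 0 < t ∧ (t : ℝ) ≤ 4 * r ^ 2 ∧
          ((Set.ncard {e : Finset (Fin d → ℤ) |
              ∃ p q : Fin d → ℤ, p ≠ q ∧ e = {p, q} ∧
                (∑ i, ((p i : ℝ)) ^ 2 = r ^ 2) ∧ (∑ i, ((q i : ℝ)) ^ 2 = r ^ 2) ∧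
                ∑ i, (p i - q i) ^ 2 = (t : ℤ)} : ℝ)) ≥
            (volume (Metric.closedBall (0 : EuclideanSpace ℝ (Fin d))
                ((2 : ℝ) ^ d - Real.sqrt d / 2))).toReal ^ 2 /
              (8 * ((2 : ℝ) ^ d) ^ 6) := by
  classical
  refine ⟨10, fun d hd => ?_⟩
  have hd1 : 1 ≤ d := by omega
  set K : ℕ := 4 ^ d with hKdef
  have hK2 : (2 : ℕ) ≤ K := by
    calc (2:ℕ) ≤ 4 ^ 1 := by norm_num
    _ ≤ 4 ^ d := Nat.pow_le_pow_right (by norm_num) hd1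
  have h4eq : ((4 : ℤ)) ^ d = ((2 : ℤ) ^ d) ^ 2 := by
    rw [← pow_mul, mul_comm, pow_mul]; norm_num
  -- the box and lattice spheres
  set box : Finset (Fin d → ℤ) :=
    Fintype.piFinset (fun _ => Finset.Icc (-(2 ^ d : ℤ)) (2 ^ d)) with hboxdef
  have hbox : ∀ x : Fin d → ℤ, (∑ i, x i ^ 2) ≤ (K : ℤ) → x ∈ box := by
    intro x hx
    simp only [hboxdef, Fintype.mem_piFinset, Finset.mem_Icc]
    intro i
    have h1 : x i ^ 2 ≤ (K : ℤ) :=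
      le_trans (Finset.single_le_sum (fun j _ => sq_nonneg (x j)) (Finset.mem_univ i)) hx
    have h2 : (K : ℤ) = ((2 : ℤ) ^ d) ^ 2 := by
      rw [hKdef]; push_cast; exact h4eq
    rw [h2] at h1
    have hp : (0 : ℤ) < 2 ^ d := by positivity
    constructor <;> nlinarith
  set Ls : ℕ → Finset (Fin d → ℤ) :=
    (fun s => box.filter fun x => (∑ i, x i ^ 2) = (s : ℤ)) with hLsdef
  set L : Finset (Fin d → ℤ) := box.filter (fun x => (∑ i, x i ^ 2) ≤ (K : ℤ)) with hLdef
  set nN : ℕ := ∑ s ∈ Finset.Icc 1 K, (Ls s).card with hnNdef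
  -- L.card ≤ nN + 1
  have hLcard : L.card ≤ nN + 1 := by
    have hsub : L ⊆ ((Finset.Icc 1 K).biUnion Ls) ∪ {0} := by
      intro x hx
      rw [hLdef, Finset.mem_filter] at hx
      obtain ⟨hxbox, hxle⟩ := hx
      rcases eq_or_lt_of_le (Finset.sum_nonneg fun i _ => sq_nonneg (x i)) with h0 | h0
      · have : ∀ i ∈ Finset.univ, x i ^ 2 = 0 := by
          rw [← Finset.sum_eq_zero_iff_of_nonneg (fun i _ => sq_nonneg (x i))]
          exact h0.symm
        have hx0 : x = 0 := by
          funext i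
          have := this i (Finset.mem_univ i)
          exact pow_eq_zero_iff (by norm_num) |>.mp this
        exact Finset.mem_union_right _ (by simp [hx0])
      · refine Finset.mem_union_left _ (Finset.mem_biUnion.mpr ⟨(∑ i, x i ^ 2).toNat, ?_, ?_⟩)
        · rw [Finset.mem_Icc]
          omega
        · rw [hLsdef, Finset.mem_filter]
          exact ⟨hxbox, by rw [Int.toNat_of_nonneg h0.le]⟩
    calc L.card ≤ (((Finset.Icc 1 K).biUnion Ls) ∪ {0}).card := Finset.card_le_card hsub
    _ ≤ ((Finset.Icc 1 K).biUnion Ls).card + 1 := by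
        simpa using Finset.card_union_le ((Finset.Icc 1 K).biUnion Ls) {0}
    _ ≤ nN + 1 := Nat.add_le_add_right Finset.card_biUnion_le 1
  -- pair classes
  set P : ℕ → ℕ → Finset ((Fin d → ℤ) × (Fin d → ℤ)) :=
    (fun s t => ((Ls s) ×ˢ (Ls s)).filter
      fun pq => pq.1 ≠ pq.2 ∧ (∑ i, (pq.1 i - pq.2 i) ^ 2) = (t : ℤ)) with hPdef
  have hdec : ∀ s, (Ls s).offDiag.card = ∑ t ∈ Finset.Icc 1 (4 * s), (P s t).card := by
    intro s
    rw [← Finset.card_biUnion]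
    · congr 1
      ext pq
      simp only [Finset.mem_offDiag, Finset.mem_biUnion, hPdef, Finset.mem_filter,
        Finset.mem_product, Finset.mem_Icc]
      constructor
      · rintro ⟨hp, hq, hne⟩
        have hp' : (∑ i, pq.1 i ^ 2) = (s : ℤ) := (Finset.mem_filter.mp hp).2
        have hq' : (∑ i, pq.2 i ^ 2) = (s : ℤ) := (Finset.mem_filter.mp hq).2
        set t0 : ℤ := ∑ i, (pq.1 i - pq.2 i) ^ 2 with ht0
        have ht0pos : 0 < t0 := by
          obtain ⟨i, hi⟩ := Function.ne_iff.mp hne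
          have hterm : 0 < (pq.1 i - pq.2 i) ^ 2 := by
            have : pq.1 i - pq.2 i ≠ 0 := sub_ne_zero.mpr hi
            positivity
          refine Finset.sum_pos' (fun j _ => sq_nonneg _) ⟨i, Finset.mem_univ i, hterm⟩
        have ht0le : t0 ≤ 4 * (s : ℤ) := by
          have hterm : ∀ i ∈ Finset.univ, (pq.1 i - pq.2 i) ^ 2 ≤ 2 * pq.1 i ^ 2 + 2 * pq.2 i ^ 2 :=
            fun i _ => by nlinarith [sq_nonneg (pq.1 i + pq.2 i)]
          calc t0 ≤ ∑ i, (2 * pq.1 i ^ 2 + 2 * pq.2 i ^ 2) := Finset.sum_le_sum hterm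
          _ = 2 * (∑ i, pq.1 i ^ 2) + 2 * (∑ i, pq.2 i ^ 2) := by
              rw [Finset.sum_add_distrib, Finset.mul_sum, Finset.mul_sum]
          _ = 4 * (s : ℤ) := by rw [hp', hq']; ring
        refine ⟨t0.toNat, ⟨by omega, by omega⟩, ⟨hp, hq⟩, hne, ?_⟩
        rw [Int.toNat_of_nonneg ht0pos.le]
      · rintro ⟨t, _, ⟨hp, hq⟩, hne, _⟩
        exact ⟨hp, hq, hne⟩
    · intro t _ t' _ htt'
      rw [Function.onFun, Finset.disjoint_left]
      rintro pq hpq hpq'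
      rw [hPdef, Finset.mem_filter] at hpq hpq'
      have : (t : ℤ) = (t' : ℤ) := by rw [← hpq.2.2, hpq'.2.2]
      exact htt' (by exact_mod_cast this)
  -- index set and pigeonhole
  set I : Finset ((_ : ℕ) × ℕ) := (Finset.Icc 1 K).sigma (fun s => Finset.Icc 1 (4 * s))
    with hIdef
  have hIne : I.Nonempty := by
    refine ⟨⟨1, 1⟩, ?_⟩
    rw [hIdef, Finset.mem_sigma]
    constructor
    · show (1 : ℕ) ∈ Finset.Icc 1 K
      rw [Finset.mem_Icc]; omega
    · show (1 : ℕ) ∈ Finset.Icc 1 (4 * 1)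
      rw [Finset.mem_Icc]; omega
  obtain ⟨⟨s, t⟩, hstI, hmax⟩ := I.exists_max_image (fun x => (P x.1 x.2).card) hIne
  have hstI' := hstI
  rw [hIdef, Finset.mem_sigma, Finset.mem_Icc, Finset.mem_Icc] at hstI'
  have hs1 : 1 ≤ s := hstI'.1.1
  have hsK : s ≤ K := hstI'.1.2
  have ht1 : 1 ≤ t := hstI'.2.1
  have ht4s : t ≤ 4 * s := hstI'.2.2
  set C : ℕ := (P s t).card with hCdef
  have hsum_le : ∑ u ∈ Finset.Icc 1 K, (Ls u).offDiag.card ≤ I.card * C := by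
    have h1 : ∑ u ∈ Finset.Icc 1 K, (Ls u).offDiag.card = ∑ x ∈ I, (P x.1 x.2).card := by
      rw [hIdef, Finset.sum_sigma]
      exact Finset.sum_congr rfl fun u _ => hdec u
    rw [h1]
    have := Finset.sum_le_card_nsmul I (fun x => (P x.1 x.2).card) C (fun x hx => hmax x hx)
    simpa using this
  have hIcard : 2 * I.card = 4 * (K * (K + 1)) := by
    have h1 : I.card = ∑ u ∈ Finset.Icc 1 K, 4 * u := by
      rw [hIdef, Finset.card_sigma]
      exact Finset.sum_congr rfl fun u _ => by rw [Nat.card_Icc]; omega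
    have h2 : ∑ u ∈ Finset.range (K + 1), u = ∑ u ∈ Finset.Icc 1 K, u := by
      have hins : Finset.range (K + 1) = insert 0 (Finset.Icc 1 K) := by
        ext a
        simp only [Finset.mem_range, Finset.mem_insert, Finset.mem_Icc]
        omega
      rw [hins, Finset.sum_insert (by simp)]
      exact zero_add _
    have h3 := Finset.sum_range_id_mul_two (K + 1)
    rw [h2] at h3
    have h4 : (K + 1) * (K + 1 - 1) = K * (K + 1) := by
      rw [Nat.add_sub_cancel]; ring
    rw [h4] at h3
    rw [h1, ← Finset.mul_sum]
    omega
  -- the image of pairs as Finsets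
  set Ef : Finset (Finset (Fin d → ℤ)) :=
    (P s t).image (fun pq => ({pq.1, pq.2} : Finset (Fin d → ℤ))) with hEfdef
  have hPprop : ∀ pq ∈ P s t, pq.1 ∈ Ls s ∧ pq.2 ∈ Ls s ∧ pq.1 ≠ pq.2 ∧
      (∑ i, (pq.1 i - pq.2 i) ^ 2) = (t : ℤ) := by
    intro pq hpq
    rw [hPdef, Finset.mem_filter, Finset.mem_product] at hpq
    exact ⟨hpq.1.1, hpq.1.2, hpq.2.1, hpq.2.2⟩
  have hfib : C ≤ 2 * Ef.card := by
    refine Finset.card_le_mul_card_image (P s t) 2 (fun b hb => ?_)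
    obtain ⟨a, ha, hab⟩ := Finset.mem_image.mp hb
    have haprop := hPprop a ha
    have hsub : ((P s t).filter fun c => ({c.1, c.2} : Finset (Fin d → ℤ)) = b) ⊆
        {(a.1, a.2), (a.2, a.1)} := by
      intro c hc
      rw [Finset.mem_filter] at hc
      have hcprop := hPprop c hc.1
      have : ({c.1, c.2} : Finset (Fin d → ℤ)) = {a.1, a.2} := by rw [hc.2, ← hab]
      rcases manyPairs_pair_eq hcprop.2.2.1 this with ⟨h1, h2⟩ | ⟨h1, h2⟩
      · simp only [Finset.mem_insert, Finset.mem_singleton]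
        left; exact Prod.ext h1 h2
      · simp only [Finset.mem_insert, Finset.mem_singleton]
        right; exact Prod.ext h1 h2
    calc ((P s t).filter fun c => ({c.1, c.2} : Finset (Fin d → ℤ)) = b).card
        ≤ ({(a.1, a.2), (a.2, a.1)} : Finset _).card := Finset.card_le_card hsub
    _ ≤ 2 := Finset.card_insert_le _ _ |>.trans (by simp)
  -- choose r
  set r : ℝ := Real.sqrt s with hrdef
  have hsposℝ : (0 : ℝ) < s := by exact_mod_cast hs1
  have hr2 : r ^ 2 = (s : ℝ) := Real.sq_sqrt hsposℝ.le
  have hrpos : 0 < r := Real.sqrt_pos.mpr hsposℝ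
  have hrle : r ≤ (2 : ℝ) ^ d := by
    rw [hrdef]
    have h1 : (s : ℝ) ≤ ((2 : ℝ) ^ d) ^ 2 := by
      have : (s : ℝ) ≤ (K : ℝ) := by exact_mod_cast hsK
      have hK' : (K : ℝ) = ((2 : ℝ) ^ d) ^ 2 := by
        rw [hKdef]; push_cast; rw [← pow_mul, mul_comm, pow_mul]; norm_num
      linarith [hK' ▸ this]
    calc Real.sqrt s ≤ Real.sqrt (((2 : ℝ) ^ d) ^ 2) := Real.sqrt_le_sqrt h1
    _ = (2 : ℝ) ^ d := Real.sqrt_sq (by positivity)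
  -- identify the set with the finset image
  have hset : {e : Finset (Fin d → ℤ) |
      ∃ p q : Fin d → ℤ, p ≠ q ∧ e = {p, q} ∧
        (∑ i, ((p i : ℝ)) ^ 2 = r ^ 2) ∧ (∑ i, ((q i : ℝ)) ^ 2 = r ^ 2) ∧
        ∑ i, (p i - q i) ^ 2 = (t : ℤ)} = (Ef : Set (Finset (Fin d → ℤ))) := by
    ext e
    simp only [Set.mem_setOf_eq, hEfdef, Finset.coe_image, Set.mem_image, Finset.mem_coe]
    constructor
    · rintro ⟨p, q, hpq, he, hp, hq, hpq2⟩
      have hmem : ∀ z : Fin d → ℤ, (∑ i, ((z i : ℝ)) ^ 2 = r ^ 2) → z ∈ Ls s := by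
        intro z hz
        rw [hr2] at hz
        have hz' : (∑ i, z i ^ 2) = (s : ℤ) := by
          have : ((∑ i, z i ^ 2 : ℤ) : ℝ) = ((s : ℤ) : ℝ) := by push_cast; exact hz
          exact_mod_cast this
        rw [hLsdef, Finset.mem_filter]
        refine ⟨hbox z ?_, hz'⟩
        rw [hz']
        exact_mod_cast hsK
      refine ⟨(p, q), ?_, he.symm⟩
      rw [hPdef, Finset.mem_filter, Finset.mem_product]
      exact ⟨⟨hmem p hp, hmem q hq⟩, hpq, hpq2⟩
    · rintro ⟨a, ha, hae⟩
      have haprop := hPprop a ha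
      have hmem : ∀ z : Fin d → ℤ, z ∈ Ls s → (∑ i, ((z i : ℝ)) ^ 2 = r ^ 2) := by
        intro z hz
        rw [hLsdef, Finset.mem_filter] at hz
        rw [hr2]
        exact_mod_cast congrArg (fun m : ℤ => (m : ℝ)) hz.2
      exact ⟨a.1, a.2, haprop.2.2.1, hae.symm,
        hmem a.1 haprop.1, hmem a.2 haprop.2.1, haprop.2.2.2⟩
  -- volume bounds
  set ρ : ℝ := (2 : ℝ) ^ d - Real.sqrt d / 2 with hρdef
  set Vr : ℝ := (volume (Metric.closedBall (0 : EuclideanSpace ℝ (Fin d)) ρ)).toReal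
    with hVrdef
  have hballfin : volume (Metric.closedBall (0 : EuclideanSpace ℝ (Fin d)) ρ) ≠ ⊤ :=
    (isCompact_closedBall _ _).measure_lt_top.ne
  have hkey : ∀ S : Set (Fin d → ℝ), MeasurableSet S →
      volume (((MeasurableEquiv.toLp 2 (Fin d → ℝ)).symm) ⁻¹' S) = volume S := fun S hS =>
    (EuclideanSpace.volume_preserving_symm_measurableEquiv_toLp (Fin d)).measure_preimage
      hS.nullMeasurableSet
  have hsqrtd : Real.sqrt d ≤ d := by
    have hd1' : (1 : ℝ) ≤ (d : ℝ) := by exact_mod_cast hd1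
    have h1 : (d : ℝ) ≤ (d : ℝ) ^ 2 := by nlinarith
    calc Real.sqrt d ≤ Real.sqrt ((d : ℝ) ^ 2) := Real.sqrt_le_sqrt h1
    _ = (d : ℝ) := Real.sqrt_sq (by positivity)
  have h9d : 9 * (d : ℝ) ≤ 2 * 2 ^ d := by exact_mod_cast manyPairs_nat_ineq d hd
  -- lower bound : Vr ≥ 8^d
  have hVlow : (8 : ℝ) ^ d ≤ Vr := by
    set cubeIn : Set (EuclideanSpace ℝ (Fin d)) :=
      ((MeasurableEquiv.toLp 2 (Fin d → ℝ)).symm) ⁻¹'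
        (Set.univ.pi fun _ : Fin d => Set.Icc (-4 : ℝ) 4) with hcubeIndef
    have hmeas : MeasurableSet (Set.univ.pi fun _ : Fin d => Set.Icc (-4 : ℝ) 4) :=
      MeasurableSet.univ_pi fun _ => measurableSet_Icc
    have hvolcube : volume cubeIn = ENNReal.ofReal ((8 : ℝ) ^ d) := by
      rw [hcubeIndef, hkey _ hmeas, volume_pi_pi]
      simp only [Real.volume_Icc]
      rw [Finset.prod_const, Finset.card_univ, Fintype.card_fin]
      rw [← ENNReal.ofReal_pow (by norm_num)]
      norm_num
    have hsub : cubeIn ⊆ Metric.closedBall (0 : EuclideanSpace ℝ (Fin d)) ρ := by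
      intro y hy
      rw [hcubeIndef, Set.mem_preimage, Set.mem_pi] at hy
      rw [Metric.mem_closedBall, dist_zero_right]
      have hnorm : ‖y‖ = Real.sqrt (∑ i, ‖y i‖ ^ 2) := EuclideanSpace.norm_eq y
      have hbound : (∑ i, ‖y i‖ ^ 2) ≤ 16 * d := by
        have hstep : (∑ i, ‖y i‖ ^ 2) ≤ ∑ _i : Fin d, (16 : ℝ) := by
          refine Finset.sum_le_sum fun i _ => ?_
          have hyy := hy i (Set.mem_univ i)
          rw [Set.mem_Icc] at hyy
          have heq : (((MeasurableEquiv.toLp 2 (Fin d → ℝ)).symm) y) i = y i := rfl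
          rw [heq] at hyy
          rw [Real.norm_eq_abs, sq_abs]
          nlinarith [hyy.1, hyy.2]
        calc (∑ i, ‖y i‖ ^ 2) ≤ ∑ _i : Fin d, (16 : ℝ) := hstep
        _ = 16 * d := by rw [Finset.sum_const, Finset.card_univ, Fintype.card_fin]; ring
      have h16d : Real.sqrt (16 * d) = 4 * Real.sqrt d := by
        rw [show (16 : ℝ) * d = 4 ^ 2 * d by norm_num, Real.sqrt_mul (by positivity),
          Real.sqrt_sq (by norm_num)]
      calc ‖y‖ = Real.sqrt (∑ i, ‖y i‖ ^ 2) := hnorm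
      _ ≤ Real.sqrt (16 * d) := Real.sqrt_le_sqrt hbound
      _ = 4 * Real.sqrt d := h16d
      _ ≤ ρ := by
          rw [hρdef]
          have : Real.sqrt d ≥ 0 := Real.sqrt_nonneg _
          nlinarith
    have hle : volume cubeIn ≤ volume (Metric.closedBall (0 : EuclideanSpace ℝ (Fin d)) ρ) :=
      measure_mono hsub
    rw [hvolcube] at hle
    rw [hVrdef]
    have := ENNReal.toReal_mono hballfin hle
    rwa [ENNReal.toReal_ofReal (by positivity)] at this
  -- upper bound : Vr ≤ L.card
  have hVup : Vr ≤ (L.card : ℝ) := by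
    set cube : (Fin d → ℤ) → Set (EuclideanSpace ℝ (Fin d)) :=
      (fun x => ((MeasurableEquiv.toLp 2 (Fin d → ℝ)).symm) ⁻¹'
        (Set.univ.pi fun i : Fin d => Set.Icc ((x i : ℝ) - 1/2) ((x i : ℝ) + 1/2)))
      with hcubedef
    have hmeas : ∀ x : Fin d → ℤ,
        MeasurableSet (Set.univ.pi fun i : Fin d =>
          Set.Icc ((x i : ℝ) - 1/2) ((x i : ℝ) + 1/2)) :=
      fun x => MeasurableSet.univ_pi fun _ => measurableSet_Icc
    have hvolcube : ∀ x : Fin d → ℤ, volume (cube x) = 1 := by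
      intro x
      rw [hcubedef, hkey _ (hmeas x), volume_pi_pi]
      simp only [Real.volume_Icc]
      have hterm : ∀ i : Fin d, ENNReal.ofReal ((x i : ℝ) + 1/2 - ((x i : ℝ) - 1/2))
          = 1 := by
        intro i
        rw [show (x i : ℝ) + 1/2 - ((x i : ℝ) - 1/2) = 1 by ring, ENNReal.ofReal_one]
      rw [Finset.prod_congr rfl fun i _ => hterm i, Finset.prod_const_one]
    have hcover : Metric.closedBall (0 : EuclideanSpace ℝ (Fin d)) ρ ⊆
        ⋃ x ∈ L, cube x := by
      intro y hy
      rw [Metric.mem_closedBall, dist_zero_right] at hy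
      set x : Fin d → ℤ := fun i => round (y i) with hxdef
      have hyi : ∀ i, |y i - (x i : ℝ)| ≤ 1/2 := fun i => abs_sub_round (y i)
      -- x is in L
      have hxL : x ∈ L := by
        set xR : EuclideanSpace ℝ (Fin d) := WithLp.toLp 2 (fun i => (x i : ℝ)) with hxRdef
        have hdiff : ‖xR - y‖ ≤ Real.sqrt d / 2 := by
          rw [EuclideanSpace.norm_eq]
          have hsum : (∑ i, ‖(xR - y) i‖ ^ 2) ≤ (d : ℝ) / 4 := by
            have hstep : (∑ i, ‖(xR - y) i‖ ^ 2) ≤ ∑ _i : Fin d, (1/4 : ℝ) := by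
              refine Finset.sum_le_sum fun i _ => ?_
              have h1 : ‖(xR - y) i‖ = |(x i : ℝ) - y i| := by
                rw [PiLp.sub_apply, Real.norm_eq_abs]
              rw [h1, sq_abs]
              have := hyi i
              rw [abs_sub_comm] at this
              nlinarith [abs_nonneg ((x i : ℝ) - y i), sq_abs ((x i : ℝ) - y i),
                abs_le.mp this]
            calc (∑ i, ‖(xR - y) i‖ ^ 2) ≤ ∑ _i : Fin d, (1/4 : ℝ) := hstep
            _ = (d : ℝ) / 4 := by
              rw [Finset.sum_const, Finset.card_univ, Fintype.card_fin]; ring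
          calc Real.sqrt (∑ i, ‖(xR - y) i‖ ^ 2) ≤ Real.sqrt ((d : ℝ) / 4) :=
            Real.sqrt_le_sqrt hsum
          _ = Real.sqrt d / 2 := by
            rw [Real.sqrt_div (by positivity) 4,
              show Real.sqrt 4 = 2 by
                rw [show (4 : ℝ) = 2 ^ 2 by norm_num, Real.sqrt_sq (by norm_num)]]
        have hxRnorm : ‖xR‖ ≤ (2 : ℝ) ^ d := by
          have heq : xR - y + y = xR := sub_add_cancel xR y
          calc ‖xR‖ = ‖xR - y + y‖ := by rw [heq]
          _ ≤ ‖xR - y‖ + ‖y‖ := norm_add_le _ _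
          _ ≤ Real.sqrt d / 2 + ρ := add_le_add hdiff hy
          _ = (2 : ℝ) ^ d := by rw [hρdef]; ring
        have hsumsq : (∑ i, (x i : ℝ) ^ 2) ≤ ((2 : ℝ) ^ d) ^ 2 := by
          have h1 : ‖xR‖ = Real.sqrt (∑ i, ‖xR i‖ ^ 2) := EuclideanSpace.norm_eq xR
          have h2 : (∑ i, ‖xR i‖ ^ 2) = ∑ i, (x i : ℝ) ^ 2 := by
            refine Finset.sum_congr rfl fun i _ => ?_
            have : ‖xR i‖ = |(x i : ℝ)| := rfl
            rw [this, sq_abs]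
          have h3 : Real.sqrt (∑ i, (x i : ℝ) ^ 2) ≤ (2 : ℝ) ^ d := by
            rw [← h2, ← h1]; exact hxRnorm
          have h4 : (0 : ℝ) ≤ ∑ i, (x i : ℝ) ^ 2 :=
            Finset.sum_nonneg fun i _ => sq_nonneg _
          nlinarith [Real.sq_sqrt h4, Real.sqrt_nonneg (∑ i, (x i : ℝ) ^ 2)]
        have hintsum : (∑ i, x i ^ 2) ≤ (K : ℤ) := by
          have h5 : ((∑ i, x i ^ 2 : ℤ) : ℝ) ≤ ((K : ℤ) : ℝ) := by
            push_cast
            calc (∑ i, (x i : ℝ) ^ 2) ≤ ((2 : ℝ) ^ d) ^ 2 := hsumsq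
            _ = (4 : ℝ) ^ d := by rw [← pow_mul, mul_comm, pow_mul]; norm_num
            _ = ((K : ℕ) : ℝ) := by rw [hKdef]; push_cast; ring
          exact_mod_cast h5
        rw [hLdef, Finset.mem_filter]
        exact ⟨hbox x hintsum, hintsum⟩
      refine Set.mem_biUnion hxL ?_
      rw [hcubedef, Set.mem_preimage, Set.mem_pi]
      intro i _
      rw [Set.mem_Icc]
      have heq : (((MeasurableEquiv.toLp 2 (Fin d → ℝ)).symm) y) i = y i := rfl
      rw [heq]
      have := abs_le.mp (hyi i)
      constructor <;> linarith [this.1, this.2]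
    have hle : volume (Metric.closedBall (0 : EuclideanSpace ℝ (Fin d)) ρ) ≤
        volume (⋃ x ∈ L, cube x) := measure_mono hcover
    have hle2 := le_trans hle (measure_biUnion_finset_le L cube)
    rw [hVrdef]
    have hsum : (∑ x ∈ L, volume (cube x)) = (L.card : ENNReal) := by
      rw [Finset.sum_congr rfl fun x _ => hvolcube x, Finset.sum_const, nsmul_eq_mul, mul_one]
    rw [hsum] at hle2
    have := ENNReal.toReal_mono (by simp) hle2
    simpa using this
  -- final arithmetic
  refine ⟨r, hrpos, hrle, t, by omega, ?_, ?_⟩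
  · rw [hr2]
    have : (t : ℝ) ≤ 4 * (s : ℝ) := by exact_mod_cast ht4s
    linarith
  · rw [hset, Set.ncard_coe_finset]
    obtain ⟨k, hkdef⟩ : ∃ k : ℝ, k = ((K : ℕ) : ℝ) := ⟨_, rfl⟩
    have hkreal : k = (4 : ℝ) ^ d := by rw [hkdef, hKdef]; push_cast; ring
    have hk2 : (2 : ℝ) ≤ k := by rw [hkdef]; exact_mod_cast hK2
    have hkpos : (0 : ℝ) < k := by linarith
    -- Cauchy-Schwarz
    have hCS : ((nN : ℝ)) ^ 2 ≤ k * ∑ u ∈ Finset.Icc 1 K, ((Ls u).card : ℝ) ^ 2 := by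
      have h := sq_sum_le_card_mul_sum_sq (s := Finset.Icc 1 K)
        (f := fun u => ((Ls u).card : ℝ))
      have hcardIcc : (((Finset.Icc 1 K).card : ℕ) : ℝ) = k := by
        rw [Nat.card_Icc, Nat.add_sub_cancel, hkdef]
      rw [hcardIcc] at h
      have hstep : ((nN : ℝ)) = ∑ u ∈ Finset.Icc 1 K, ((Ls u).card : ℝ) := by
        rw [hnNdef]; push_cast; ring
      rw [hstep]
      exact h
    -- sum of offdiag cards
    have hoffd : ∀ u : ℕ, (((Ls u).offDiag.card : ℕ) : ℝ) =
        ((Ls u).card : ℝ) ^ 2 - ((Ls u).card : ℝ) := by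
      intro u
      rw [Finset.offDiag_card]
      have hle : (Ls u).card ≤ (Ls u).card * (Ls u).card := by
        rcases Nat.eq_zero_or_pos (Ls u).card with h | h
        · simp [h]
        · exact Nat.le_mul_of_pos_left _ h
      rw [Nat.cast_sub hle]
      push_cast; ring
    have hsumoff : ∑ u ∈ Finset.Icc 1 K, (((Ls u).card : ℝ) ^ 2 - ((Ls u).card : ℝ)) ≤
        2 * k * (k + 1) * (C : ℝ) := by
      have h1 : (∑ u ∈ Finset.Icc 1 K, ((Ls u).offDiag.card : ℝ)) ≤ ((I.card : ℝ)) * C := by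
        exact_mod_cast hsum_le
      have h2 : 2 * ((I.card : ℝ)) = 4 * (((K : ℕ) : ℝ) * (((K : ℕ) : ℝ) + 1)) := by
        exact_mod_cast hIcard
      have h3 : ((I.card : ℝ)) = 2 * k * (k + 1) := by rw [hkdef]; linarith
      calc ∑ u ∈ Finset.Icc 1 K, (((Ls u).card : ℝ) ^ 2 - ((Ls u).card : ℝ))
          = ∑ u ∈ Finset.Icc 1 K, ((Ls u).offDiag.card : ℝ) :=
            Finset.sum_congr rfl fun u _ => (hoffd u).symm
      _ ≤ ((I.card : ℝ)) * C := h1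
      _ = 2 * k * (k + 1) * (C : ℝ) := by rw [h3]
    have hsumsplit : ∑ u ∈ Finset.Icc 1 K, (((Ls u).card : ℝ) ^ 2 - ((Ls u).card : ℝ))
        = (∑ u ∈ Finset.Icc 1 K, ((Ls u).card : ℝ) ^ 2) - (nN : ℝ) := by
      rw [Finset.sum_sub_distrib]
      congr 1
      rw [hnNdef]; push_cast; ring
    -- key numeric facts
    have hnV : Vr - 1 ≤ (nN : ℝ) := by
      have h1 : Vr ≤ (L.card : ℝ) := hVup
      have h2 : (L.card : ℝ) ≤ (nN : ℝ) + 1 := by exact_mod_cast hLcard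
      linarith
    have hV8k : 8 * k ≤ Vr := by
      have h2 : (8 : ℝ) ≤ (2 : ℝ) ^ d := by
        calc (8 : ℝ) = 2 ^ 3 := by norm_num
        _ ≤ (2 : ℝ) ^ d := pow_le_pow_right₀ (by norm_num) (by omega)
      have h4 : (2 : ℝ) ^ d * (4 : ℝ) ^ d = (8 : ℝ) ^ d := by rw [← mul_pow]; norm_num
      have h5 : (0 : ℝ) < (4 : ℝ) ^ d := by positivity
      rw [hkreal]
      nlinarith [hVlow]
    have hVpos : 0 < Vr := by linarith
    -- (k+1) Vr² ≤ 2k (n² - k n)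
    have hkey2 : (k + 1) * Vr ^ 2 ≤ 2 * k * (((nN : ℝ)) ^ 2 - k * (nN : ℝ)) := by
      obtain ⟨n', hn'def⟩ : ∃ n' : ℝ, n' = (nN : ℝ) := ⟨_, rfl⟩
      rw [← hn'def] at hnV ⊢
      have hn7 : 7 * k ≤ n' := by linarith
      have hmono : 0 ≤ (n' - (Vr - 1)) * (n' + (Vr - 1) - k) :=
        mul_nonneg (by linarith) (by linarith)
      have hterm1 : 0 ≤ (k - 1) * Vr * (Vr - 8 * k) :=
        mul_nonneg (mul_nonneg (by linarith) hVpos.le) (by linarith)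
      have hterm2 : 0 ≤ k * (3 * k - 6) * Vr :=
        mul_nonneg (mul_nonneg hkpos.le (by linarith)) hVpos.le
      nlinarith [hmono, hterm1, hterm2, hkpos, hk2, hVpos]
    -- combine
    have hstar : ((nN : ℝ)) ^ 2 - k * (nN : ℝ) ≤ 2 * k ^ 2 * (k + 1) * (C : ℝ) := by
      have h1 : ((nN : ℝ)) ^ 2 ≤ k * ((∑ u ∈ Finset.Icc 1 K, ((Ls u).card : ℝ) ^ 2)) := hCS
      have h2 := hsumoff
      rw [hsumsplit] at h2
      nlinarith
    have hCE : (C : ℝ) ≤ 2 * (Ef.card : ℝ) := by exact_mod_cast hfib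
    have hpow : ((2 : ℝ) ^ d) ^ 6 = k ^ 3 := by
      rw [hkreal, ← pow_mul, ← pow_mul, show (4 : ℝ) = 2 ^ 2 by norm_num, ← pow_mul]
      congr 1
      omega
    rw [ge_iff_le, hpow]
    rw [div_le_iff₀ (by positivity)]
    have hk1pos : (0 : ℝ) < k + 1 := by linarith
    have h6 : (k + 1) * Vr ^ 2 ≤ (k + 1) * ((Ef.card : ℝ) * (8 * k ^ 3)) := by
      have e1 : 2 * k * (((nN : ℝ)) ^ 2 - k * (nN : ℝ)) ≤
          2 * k * (2 * k ^ 2 * (k + 1) * (C : ℝ)) :=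
        mul_le_mul_of_nonneg_left hstar (by positivity)
      have e2 := mul_le_mul_of_nonneg_left hCE
        (by positivity : (0 : ℝ) ≤ 4 * k ^ 3 * (k + 1))
      nlinarith [hkey2, e1, e2]
    exact le_of_mul_le_mul_left h6 hk1pos
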